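/- arXiv:0804.1783 — 4 statements merged into one kernel-verified Lean document; each statement's English description precedes it below -/
import Mathlib

section
/- Let X be a Banach space, A0 : X → X a bounded linear operator such that exp(t·A0) is an isometry of X for every t ∈ ℝ, and A1 : ℝ → B(X) a map that is continuous in operator norm at 0. Then for every s0 > 0, sup_{s ∈ [0,s0]} ‖ exp((s/ε)(A0 + ε·A1(ε))) − exp((s/ε)(A0 + ε·A1(0))) ‖ → 0 as ε → 0 (ε ≠ 0), where ‖·‖ is the operator norm on B(X). -/
open Filter Topology NormedSpace

set_option synthInstance.maxHeartbeats 1000000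
set_option maxHeartbeats 1000000

section DuhamelAux

variable {X : Type*} [NormedAddCommGroup X] [NormedSpace ℝ X] [CompleteSpace X]

lemma dc_deriv (A0 B : X →L[ℝ] X) (x : X) (u : ℝ) :
    HasDerivAt (fun u : ℝ => exp ((-u) • A0) (exp (u • B) x))
      (exp ((-u) • A0) (((B - A0) * exp (u • B)) x)) u := by
  have hc : HasDerivAt (fun u : ℝ => exp ((-u) • A0))
      ((-1 : ℝ) • (exp ((-u) • A0) * A0)) u := by
    have h1 := (hasDerivAt_exp_smul_const (𝕂 := ℝ) A0 (-u)).scomp u (hasDerivAt_neg u)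
    simpa [Function.comp_def] using h1
  have hv : HasDerivAt (fun u : ℝ => exp (u • B) x)
      ((exp (u • B) * B) x) u := by
    have h2 := (hasDerivAt_exp_smul_const (𝕂 := ℝ) B u).clm_apply (hasDerivAt_const u x)
    simpa using h2
  have h3 := hc.clm_apply hv
  convert h3 using 1
  have hcomm : B * exp (u • B) = exp (u • B) * B :=
    (((Commute.refl B).smul_left u).exp_left).symm
  rw [sub_mul, hcomm]
  simp only [ContinuousLinearMap.sub_apply, map_sub, neg_one_smul,
    ContinuousLinearMap.neg_apply, ContinuousLinearMap.mul_apply]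
  abel

lemma dc_growth (A0 : X →L[ℝ] X) (hiso : ∀ (t : ℝ) (x : X), ‖exp (t • A0) x‖ = ‖x‖)
    (D : X →L[ℝ] X) {t : ℝ} (ht : 0 ≤ t) (x : X) :
    ‖exp (t • (A0 + D)) x‖ ≤ Real.exp (‖D‖ * t) * ‖x‖ := by
  set f := fun u : ℝ => exp ((-u) • A0) (exp (u • (A0 + D)) x) with hfdef
  set f' := fun u : ℝ => exp ((-u) • A0) ((D * exp (u • (A0 + D))) x) with hf'def
  have hf : ∀ u : ℝ, HasDerivAt f (f' u) u := by
    intro u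
    have := dc_deriv A0 (A0 + D) x u
    simpa [hfdef, hf'def] using this
  have hnorm : ∀ u : ℝ, ‖f u‖ = ‖exp (u • (A0 + D)) x‖ := fun u => hiso (-u) _
  have key := norm_le_gronwallBound_of_norm_deriv_right_le (f := f) (f' := f')
    (a := 0) (b := t) (δ := ‖x‖) (K := ‖D‖) (ε := 0)
    (fun u _ => (hf u).continuousAt.continuousWithinAt)
    (fun u _ => (hf u).hasDerivWithinAt)
    (by simp [hfdef])
    (fun u _ => by
      have h1 : ‖f' u‖ = ‖D (exp (u • (A0 + D)) x)‖ := by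
        rw [hf'def]; simpa using hiso (-u) _
      have h2 : ‖D (exp (u • (A0 + D)) x)‖ ≤ ‖D‖ * ‖exp (u • (A0 + D)) x‖ :=
        D.le_opNorm _
      rw [h1, ← hnorm u] at *
      linarith [h2])
    t (Set.right_mem_Icc.mpr ht)
  rw [← hnorm t]
  calc ‖f t‖ ≤ gronwallBound ‖x‖ ‖D‖ 0 (t - 0) := key
    _ = Real.exp (‖D‖ * t) * ‖x‖ := by rw [gronwallBound_ε0, sub_zero, mul_comm]

lemma dc_gb {K ε t : ℝ} (hK : 0 ≤ K) (hε : 0 ≤ ε) (ht : 0 ≤ t) :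
    gronwallBound 0 K ε t ≤ ε * t * Real.exp (K * t) := by
  rcases eq_or_lt_of_le hK with h | h
  · rw [← h, gronwallBound_K0]
    simp
  · rw [gronwallBound_of_K_ne_0 (ne_of_gt h)]
    simp only [zero_mul, zero_add, div_mul_eq_mul_div]
    rw [div_le_iff₀ h]
    have h1 : 1 - K * t ≤ Real.exp (-(K * t)) := by
      linarith [Real.add_one_le_exp (-(K * t))]
    have h4 : Real.exp (-(K * t)) * Real.exp (K * t) = 1 := by
      rw [← Real.exp_add]; simp
    have h3 : Real.exp (K * t) - 1 ≤ K * t * Real.exp (K * t) := by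
      nlinarith [mul_le_mul_of_nonneg_right h1 (Real.exp_pos (K * t)).le]
    nlinarith [Real.exp_pos (K * t), mul_le_mul_of_nonneg_left h3 hε]

lemma dc_diff_op (A0 : X →L[ℝ] X) (hiso : ∀ (t : ℝ) (x : X), ‖exp (t • A0) x‖ = ‖x‖)
    (D D' : X →L[ℝ] X) {t : ℝ} (ht : 0 ≤ t) :
    ‖exp (t • (A0 + D)) - exp (t • (A0 + D'))‖
      ≤ ‖D - D'‖ * t * Real.exp (t * (‖D‖ + ‖D'‖)) := by
  have hRHS : 0 ≤ ‖D - D'‖ * t * Real.exp (t * (‖D‖ + ‖D'‖)) :=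
    mul_nonneg (mul_nonneg (norm_nonneg _) ht) (Real.exp_pos _).le
  refine ContinuousLinearMap.opNorm_le_bound _ hRHS (fun x => ?_)
  set B := A0 + D with hB
  set C := A0 + D' with hC
  set ψ := fun u : ℝ =>
    exp ((-u) • A0) (exp (u • B) x) - exp ((-u) • A0) (exp (u • C) x) with hψdef
  set ψ' := fun u : ℝ =>
    exp ((-u) • A0) ((D * exp (u • B)) x) - exp ((-u) • A0) ((D' * exp (u • C)) x)
    with hψ'def
  have hψd : ∀ u : ℝ, HasDerivAt ψ (ψ' u) u := by
    intro u
    have h1 := (dc_deriv A0 B x u).sub (dc_deriv A0 C x u)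
    simpa [hψdef, hψ'def, hB, hC, Pi.sub_def] using h1
  set ε₁ := ‖D - D'‖ * (Real.exp (‖D'‖ * t) * ‖x‖) with hε₁
  have hψnorm : ∀ u : ℝ, ‖ψ u‖ = ‖exp (u • B) x - exp (u • C) x‖ := by
    intro u
    rw [hψdef]
    simp only [← map_sub]
    exact hiso (-u) _
  have key := norm_le_gronwallBound_of_norm_deriv_right_le (f := ψ) (f' := ψ')
    (a := 0) (b := t) (δ := 0) (K := ‖D‖) (ε := ε₁)
    (fun u _ => (hψd u).continuousAt.continuousWithinAt)
    (fun u _ => (hψd u).hasDerivWithinAt)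
    (by simp [hψdef])
    (fun u hu => by
      have h1 : ‖ψ' u‖ = ‖D (exp (u • B) x) - D' (exp (u • C) x)‖ := by
        rw [hψ'def]
        simp only [← map_sub]
        exact hiso (-u) _
      have h2 : ‖D (exp (u • B) x) - D' (exp (u • C) x)‖
          ≤ ‖D‖ * ‖exp (u • B) x - exp (u • C) x‖ + ‖D - D'‖ * ‖exp (u • C) x‖ := by
        have e1 : D (exp (u • B) x) - D' (exp (u • C) x)
            = D (exp (u • B) x - exp (u • C) x) + (D - D') (exp (u • C) x) := by
          simp only [map_sub, ContinuousLinearMap.sub_apply]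
          abel
        rw [e1]
        exact le_trans (norm_add_le _ _)
          (add_le_add (D.le_opNorm _) ((D - D').le_opNorm _))
      have h3 : ‖exp (u • C) x‖ ≤ Real.exp (‖D'‖ * t) * ‖x‖ := by
        refine le_trans (dc_growth A0 hiso D' hu.1 x) ?_
        have : Real.exp (‖D'‖ * u) ≤ Real.exp (‖D'‖ * t) :=
          Real.exp_le_exp.mpr (mul_le_mul_of_nonneg_left (le_of_lt hu.2) (norm_nonneg _))
        exact mul_le_mul_of_nonneg_right this (norm_nonneg x)
      rw [h1, hψnorm u]
      calc ‖D (exp (u • B) x) - D' (exp (u • C) x)‖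
          ≤ ‖D‖ * ‖exp (u • B) x - exp (u • C) x‖ + ‖D - D'‖ * ‖exp (u • C) x‖ := h2
        _ ≤ ‖D‖ * ‖exp (u • B) x - exp (u • C) x‖ + ε₁ := by
            rw [hε₁]
            exact add_le_add_right (mul_le_mul_of_nonneg_left h3 (norm_nonneg _)) _)
    t (Set.right_mem_Icc.mpr ht)
  have hε₁0 : 0 ≤ ε₁ :=
    mul_nonneg (norm_nonneg _) (mul_nonneg (Real.exp_pos _).le (norm_nonneg _))
  have hfinal : ‖(exp (t • B) - exp (t • C)) x‖ ≤ ε₁ * t * Real.exp (‖D‖ * t) := by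
    rw [ContinuousLinearMap.sub_apply, ← hψnorm t]
    calc ‖ψ t‖ ≤ gronwallBound 0 ‖D‖ ε₁ (t - 0) := key
      _ ≤ ε₁ * t * Real.exp (‖D‖ * t) := by rw [sub_zero]; exact dc_gb (norm_nonneg _) hε₁0 ht
  refine le_trans hfinal (le_of_eq ?_)
  rw [hε₁, mul_add, Real.exp_add]
  ring

end DuhamelAux

/-- **Duhamel comparison step for the weak coupling limit.**
Let `X` be a Banach space, `A0` a bounded operator whose exponentials are isometries, and
`A1 : ℝ → B(X)` norm-continuous at `0`.  Then for every `s0 > 0`,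
`sup_{s ∈ [0,s0]} ‖exp ((s/ε)(A0 + ε A1(ε))) − exp ((s/ε)(A0 + ε A1(0)))‖ → 0`
as `ε → 0`, `ε ≠ 0` (operator norm). -/
theorem duhamel_comparison_weak_coupling
    {X : Type*} [NormedAddCommGroup X] [NormedSpace ℝ X] [CompleteSpace X]
    (A0 : X →L[ℝ] X)
    (hiso : ∀ (t : ℝ) (x : X), ‖exp (t • A0) x‖ = ‖x‖)
    (A1 : ℝ → X →L[ℝ] X) (hA1 : ContinuousAt A1 0)
    (s0 : ℝ) (hs0 : 0 < s0) :
    Tendsto (fun ε : ℝ =>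
        ⨆ s : Set.Icc (0:ℝ) s0,
          ‖exp (((s : ℝ) / ε) • (A0 + ε • A1 ε))
              - exp (((s : ℝ) / ε) • (A0 + ε • A1 0))‖)
      (𝓝[≠] (0 : ℝ)) (𝓝 0) := by
  set M : ℝ → ℝ := fun ε => s0 * ‖A1 ε - A1 0‖ * Real.exp (s0 * (‖A1 ε‖ + ‖A1 0‖)) with hM
  have hMnn : ∀ ε : ℝ, 0 ≤ M ε := fun ε =>
    mul_nonneg (mul_nonneg hs0.le (norm_nonneg _)) (Real.exp_pos _).le
  have hbound : ∀ ε : ℝ, ε ≠ 0 → ∀ s : Set.Icc (0:ℝ) s0,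
      ‖exp (((s : ℝ) / ε) • (A0 + ε • A1 ε))
          - exp (((s : ℝ) / ε) • (A0 + ε • A1 0))‖ ≤ M ε := by
    intro ε hε ⟨s, hs1, hs2⟩
    have hεabs : (0:ℝ) < |ε| := abs_pos.mpr hε
    have nsm : ∀ (c : ℝ) (T : X →L[ℝ] X), ‖c • T‖ = |c| * ‖T‖ := fun c T => norm_smul c T
    have key : ‖exp ((s / ε) • (A0 + ε • A1 ε)) - exp ((s / ε) • (A0 + ε • A1 0))‖
        ≤ ‖ε • (A1 ε - A1 0)‖ * |s / ε|
            * Real.exp (|s / ε| * (‖ε • A1 ε‖ + ‖ε • A1 0‖)) := by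
      rcases hε.lt_or_gt with hεneg | hεpos
      · have ht : 0 ≤ -(s / ε) := by
          have : s / ε ≤ 0 := div_nonpos_of_nonneg_of_nonpos hs1 hεneg.le
          linarith
        have habs : |s / ε| = -(s / ε) := abs_of_nonpos (by linarith)
        have hiso' : ∀ (t : ℝ) (x : X), ‖exp (t • (-A0)) x‖ = ‖x‖ := by
          intro t x
          rw [smul_neg, ← neg_smul]
          exact hiso (-t) x
        have e1 : (s / ε) • (A0 + ε • A1 ε) = (-(s / ε)) • ((-A0) + (-ε) • A1 ε) := by
          module
        have e2 : (s / ε) • (A0 + ε • A1 0) = (-(s / ε)) • ((-A0) + (-ε) • A1 0) := by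
          module
        have h := dc_diff_op (-A0) hiso' ((-ε) • A1 ε) ((-ε) • A1 0) ht
        rw [e1, e2]
        refine le_trans h (le_of_eq ?_)
        have n1 : ∀ T : X →L[ℝ] X, ‖(-ε) • T‖ = ‖ε • T‖ := by
          intro T; rw [nsm, nsm, abs_neg]
        rw [habs, ← smul_sub, n1, n1, n1]
      · have ht : 0 ≤ s / ε := div_nonneg hs1 hεpos.le
        have habs : |s / ε| = s / ε := abs_of_nonneg ht
        have h := dc_diff_op A0 hiso (ε • A1 ε) (ε • A1 0) ht
        refine le_trans h (le_of_eq ?_)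
        rw [habs, ← smul_sub]
    refine le_trans key ?_
    have e3 : ‖ε • (A1 ε - A1 0)‖ * |s / ε| = s * ‖A1 ε - A1 0‖ := by
      rw [nsm, abs_div, abs_of_nonneg hs1]
      field_simp
    have e4 : |s / ε| * (‖ε • A1 ε‖ + ‖ε • A1 0‖) = s * (‖A1 ε‖ + ‖A1 0‖) := by
      rw [nsm, nsm, abs_div, abs_of_nonneg hs1]
      field_simp
    rw [e3, e4, hM]
    have h5 : s * ‖A1 ε - A1 0‖ ≤ s0 * ‖A1 ε - A1 0‖ :=
      mul_le_mul_of_nonneg_right hs2 (norm_nonneg _)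
    have h6 : Real.exp (s * (‖A1 ε‖ + ‖A1 0‖)) ≤ Real.exp (s0 * (‖A1 ε‖ + ‖A1 0‖)) :=
      Real.exp_le_exp.mpr (mul_le_mul_of_nonneg_right hs2
        (add_nonneg (norm_nonneg _) (norm_nonneg _)))
    exact mul_le_mul h5 h6 (Real.exp_pos _).le
      (mul_nonneg hs0.le (norm_nonneg _))
  have hMten : Tendsto M (𝓝[≠] (0:ℝ)) (𝓝 0) := by
    have hφ : Continuous (fun B : X →L[ℝ] X =>
        s0 * ‖B - A1 0‖ * Real.exp (s0 * (‖B‖ + ‖A1 0‖))) := by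
      exact (continuous_const.mul ((continuous_id.sub continuous_const).norm)).mul
        (Real.continuous_exp.comp (continuous_const.mul (continuous_norm.add continuous_const)))
    have h : Tendsto (fun ε => s0 * ‖A1 ε - A1 0‖ * Real.exp (s0 * (‖A1 ε‖ + ‖A1 0‖)))
        (𝓝[≠] (0:ℝ)) (𝓝 (s0 * ‖A1 0 - A1 0‖ * Real.exp (s0 * (‖A1 0‖ + ‖A1 0‖)))) :=
      (hφ.tendsto (A1 0)).comp (hA1.mono_left nhdsWithin_le_nhds)
    simpa [hM, Function.comp_def] using h
  refine squeeze_zero' ?_ ?_ hMten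
  · exact Eventually.of_forall fun ε => Real.iSup_nonneg fun s => norm_nonneg _
  · filter_upwards [self_mem_nhdsWithin] with ε hε
    exact Real.iSup_le (hbound ε hε) (hMnn ε)
end

section
/- In the finite-dimensional repeated interaction setup, assume Hypothesis (H1). Then T(−λ,τ) = T(λ,τ) for every λ ∈ ℝ and τ > 0; i.e., λ ↦ T(λ,τ) is an even function of λ. -/
open Filter Topology NormedSpace
open scoped Kronecker Matrix.Norms.L2Operator Matrix ComplexOrder

set_option synthInstance.maxHeartbeats 1000000
set_option maxHeartbeats 1000000

noncomputable section

/-- The norm topology on continuous linear endomorphisms of a matrix space is a ring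
topology.  (This is definitionally the instance coming from the seminormed ring structure;
we register it locally to help instance resolution.) -/
local instance clmTopologicalRing {N : Type*} [Fintype N] [DecidableEq N] :
    IsTopologicalRing (Matrix N N ℂ →L[ℂ] Matrix N N ℂ) :=
  NonUnitalSeminormedRing.toIsTopologicalRing (α := Matrix N N ℂ →L[ℂ] Matrix N N ℂ)

/-- The Gibbs state at inverse temperature `β` associated with the hamiltonian `hE`. -/
def gibbsState {m : ℕ} (β : ℝ) (hE : Matrix (Fin m) (Fin m) ℂ)
    (y : Matrix (Fin m) (Fin m) ℂ) : ℂ :=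
  (exp ((-β : ℂ) • hE) * y).trace / (exp ((-β : ℂ) • hE)).trace

/-- The commutator `ad_a = [a, ·]` as a continuous linear map on a matrix space. -/
def adC {N : Type*} [Fintype N] [DecidableEq N] (a : Matrix N N ℂ) :
    Matrix N N ℂ →L[ℂ] Matrix N N ℂ :=
  LinearMap.toContinuousLinearMap (LinearMap.mulLeft ℂ a - LinearMap.mulRight ℂ a)

/-- The embedding `x ↦ x ⊗ 1` of the small system into the full system. -/
def inclS (n m : ℕ) :
    Matrix (Fin n) (Fin n) ℂ →L[ℂ] Matrix (Fin n × Fin m) (Fin n × Fin m) ℂ :=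
  LinearMap.toContinuousLinearMap
    { toFun := fun x => x ⊗ₖ (1 : Matrix (Fin m) (Fin m) ℂ)
      map_add' := fun x y => Matrix.add_kronecker x y 1
      map_smul' := fun c x => by simpa using Matrix.smul_kronecker c x 1 }

/-- The coupled dynamics `φ_SE^t = exp (t (i·ad_h + i·λ·ad_v))` of the full system. -/
def phiSE {n m : ℕ} (h v : Matrix (Fin n × Fin m) (Fin n × Fin m) ℂ) (lam t : ℝ) :
    Matrix (Fin n × Fin m) (Fin n × Fin m) ℂ →L[ℂ] Matrix (Fin n × Fin m) (Fin n × Fin m) ℂ :=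
  exp ((t : ℂ) • (Complex.I • adC h + ((Complex.I * lam : ℂ)) • adC v))

/-- The reduced one-step map `T(λ,τ) : x ↦ E_S (φ_SE^τ (x ⊗ 1))`. -/
def Tred {n m : ℕ}
    (ES : Matrix (Fin n × Fin m) (Fin n × Fin m) ℂ →L[ℂ] Matrix (Fin n) (Fin n) ℂ)
    (h v : Matrix (Fin n × Fin m) (Fin n × Fin m) ℂ) (lam tau : ℝ) :
    Matrix (Fin n) (Fin n) ℂ →L[ℂ] Matrix (Fin n) (Fin n) ℂ :=
  ES ∘L phiSE h v lam tau ∘L inclS n m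

/-- The free dynamics `α_S^t : x ↦ e^{i t h_S} x e^{−i t h_S}` of the small system, as a
continuous linear map. -/
def alphaS {n : ℕ} (hS : Matrix (Fin n) (Fin n) ℂ) (t : ℝ) :
    Matrix (Fin n) (Fin n) ℂ →L[ℂ] Matrix (Fin n) (Fin n) ℂ :=
  LinearMap.toContinuousLinearMap
    ((LinearMap.mulRight ℂ (exp ((-(Complex.I * t) : ℂ) • hS))).comp
      (LinearMap.mulLeft ℂ (exp ((Complex.I * t : ℂ) • hS))))

/-- The free dynamics `α_SE^t : y ↦ e^{i t h} y e^{−i t h}` of the full system. -/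
def alphaSE {N : Type*} [Fintype N] [DecidableEq N] (h : Matrix N N ℂ) (t : ℝ)
    (y : Matrix N N ℂ) : Matrix N N ℂ :=
  exp ((Complex.I * t : ℂ) • h) * y * exp ((-(Complex.I * t) : ℂ) • h)

/-- A state on the matrix algebra: a normalized positive linear functional. -/
def IsState {n : ℕ} (ω : Matrix (Fin n) (Fin n) ℂ →ₗ[ℂ] ℂ) : Prop :=
  ω 1 = 1 ∧ ∀ x : Matrix (Fin n) (Fin n) ℂ, x.PosSemidef → 0 ≤ ω x

/-- Hypothesis (H1): there is a projection `p0` of the chain element, commuting with the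
chain hamiltonian `h_E`, such that the interaction `v` is off-diagonal with respect to
`p0`. -/
def HypH1 {n m : ℕ} (hE : Matrix (Fin m) (Fin m) ℂ)
    (v : Matrix (Fin n × Fin m) (Fin n × Fin m) ℂ) : Prop :=
  ∃ p0 : Matrix (Fin m) (Fin m) ℂ, p0.IsHermitian ∧ p0 * p0 = p0 ∧ p0 * hE = hE * p0 ∧
    v = ((1 : Matrix (Fin n) (Fin n) ℂ) ⊗ₖ p0) * v
          * ((1 : Matrix (Fin n) (Fin n) ℂ) ⊗ₖ (1 - p0))
      + ((1 : Matrix (Fin n) (Fin n) ℂ) ⊗ₖ (1 - p0)) * v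
          * ((1 : Matrix (Fin n) (Fin n) ℂ) ⊗ₖ p0)

/-! ### Auxiliary lemmas for the evenness proof -/

private lemma conj_sandwich {N : Type*} [Fintype N] [DecidableEq N]
    (W a x : Matrix N N ℂ) (hW : W * W = 1) :
    W * (a * (W * x * W) - (W * x * W) * a) * W = (W * a * W) * x - x * (W * a * W) := by
  have h1 : W * (a * (W * x * W)) * W = (W * a * W) * x * (W * W) := by noncomm_ring
  have h2 : W * ((W * x * W) * a) * W = (W * W) * (x * (W * a * W)) := by noncomm_ring
  rw [mul_sub, sub_mul, h1, h2, hW, mul_one, one_mul]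

private lemma stdBasis_kron {n m : ℕ} (i j : Fin n × Fin m) (c : ℂ) :
    Matrix.single i j c
      = c • (Matrix.single i.1 j.1 (1:ℂ) ⊗ₖ Matrix.single i.2 j.2 (1:ℂ)) := by
  ext ⟨p,q⟩ ⟨r,s⟩
  simp only [Matrix.single, Matrix.kroneckerMap_apply, Matrix.smul_apply,
    Matrix.of_apply, Prod.mk.injEq, smul_eq_mul, mul_ite, mul_one, mul_zero, ite_and]
  split_ifs <;> simp_all [Prod.ext_iff]

private lemma clm_ext_kron {n m : ℕ} {F : Type*} [NormedAddCommGroup F] [NormedSpace ℂ F]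
    (f g : Matrix (Fin n × Fin m) (Fin n × Fin m) ℂ →L[ℂ] F)
    (H : ∀ (a : Matrix (Fin n) (Fin n) ℂ) (b : Matrix (Fin m) (Fin m) ℂ),
      f (a ⊗ₖ b) = g (a ⊗ₖ b)) : f = g := by
  refine ContinuousLinearMap.ext fun z => ?_
  conv_lhs => rw [Matrix.matrix_eq_sum_single z]
  conv_rhs => rw [Matrix.matrix_eq_sum_single z]
  rw [map_sum, map_sum]
  refine Finset.sum_congr rfl fun i _ => ?_
  rw [map_sum, map_sum]
  refine Finset.sum_congr rfl fun j _ => ?_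
  rw [stdBasis_kron i j, map_smul, map_smul, H]

private lemma one_kron_neg {n m : ℕ} (b : Matrix (Fin m) (Fin m) ℂ) :
    (1 : Matrix (Fin n) (Fin n) ℂ) ⊗ₖ (-b) = -((1 : Matrix (Fin n) (Fin n) ℂ) ⊗ₖ b) := by
  ext ⟨p,q⟩ ⟨r,s⟩
  simp [Matrix.kroneckerMap_apply, mul_neg]

/-- Conjugation `x ↦ W x W` as a continuous linear map. -/
private def conjCLM {N : Type*} [Fintype N] [DecidableEq N] (W : Matrix N N ℂ) :
    Matrix N N ℂ →L[ℂ] Matrix N N ℂ :=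
  LinearMap.toContinuousLinearMap
    ((LinearMap.mulRight ℂ W).comp (LinearMap.mulLeft ℂ W))

private lemma conjCLM_apply {N : Type*} [Fintype N] [DecidableEq N] (W x : Matrix N N ℂ) :
    conjCLM W x = W * x * W := rfl

private lemma conj_tsum {A : Type*} [Ring A] [TopologicalSpace A] [IsTopologicalRing A]
    [T2Space A] (u c : A) (huc : u * c = 1) (hcu : c * u = 1) (f : ℕ → A) :
    ∑' n, u * f n * c = u * (∑' n, f n) * c := by
  by_cases hs : Summable f
  · obtain ⟨a, ha⟩ := hs
    have hmap : HasSum (fun n => u * f n * c) (u * a * c) := (ha.mul_left u).mul_right c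
    rw [ha.tsum_eq, hmap.tsum_eq]
  · have hs2 : ¬ Summable (fun n => u * f n * c) := by
      intro h2
      apply hs
      have h3 : Summable (fun n => c * (u * f n * c) * u) := (h2.mul_left c).mul_right u
      have h4 : (fun n => c * (u * f n * c) * u) = f := by
        funext k
        have : c * (u * f k * c) * u = (c * u) * f k * (c * u) := by noncomm_ring
        rw [this, hcu, one_mul, mul_one]
      rwa [h4] at h3
    rw [tsum_eq_zero_of_not_summable hs, tsum_eq_zero_of_not_summable hs2, mul_zero, zero_mul]

private lemma exp_conj_clm {N : Type*} [Fintype N] [DecidableEq N]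
    (U C x : Matrix N N ℂ →L[ℂ] Matrix N N ℂ) (hUC : U * C = 1) (hCU : C * U = 1) :
    exp (U * x * C) = U * exp x * C := by
  have hpow : ∀ k : ℕ, (U * x * C) ^ k = U * x ^ k * C := by
    intro k
    induction k with
    | zero => simp [hUC]
    | succ k ih =>
        rw [pow_succ, ih, pow_succ]
        have h1 : U * x ^ k * C * (U * x * C) = U * x ^ k * (C * U) * x * C := by noncomm_ring
        rw [h1, hCU, mul_one, mul_assoc U (x ^ k) x]
  have he : ∀ y : Matrix N N ℂ →L[ℂ] Matrix N N ℂ,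
      exp y = ∑' k : ℕ, ((k.factorial : ℂ))⁻¹ • y ^ k := fun y => by
    rw [exp_eq_tsum ℂ]
  rw [he, he]
  rw [← conj_tsum U C hUC hCU (fun n => ((n.factorial : ℂ))⁻¹ • x ^ n)]
  have hsc : ∀ (c : ℂ) (y : Matrix N N ℂ →L[ℂ] Matrix N N ℂ),
      U * (c • y) * C = c • (U * y * C) := fun c y => by
    refine ContinuousLinearMap.ext fun z => ?_
    simp [ContinuousLinearMap.mul_apply, map_smul]
  refine tsum_congr fun k => ?_
  rw [hpow k]
  exact (hsc _ _).symm

private lemma adC_apply {N : Type*} [Fintype N] [DecidableEq N] (a x : Matrix N N ℂ) :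
    adC a x = a * x - x * a := rfl

/-- **Evenness of `T(λ,τ)` in the coupling constant.**  Under Hypothesis (H1),
`T(−λ,τ) = T(λ,τ)` for all `λ ∈ ℝ` and `τ > 0`. -/
theorem Tred_even_in_coupling
    (n m : ℕ) (hn : 0 < n) (hm : 0 < m) (β : ℝ) (hβ : 0 < β)
    (hS : Matrix (Fin n) (Fin n) ℂ) (hhS : hS.IsHermitian)
    (hE : Matrix (Fin m) (Fin m) ℂ) (hhE : hE.IsHermitian)
    (h : Matrix (Fin n × Fin m) (Fin n × Fin m) ℂ)
    (hdef : h = hS ⊗ₖ (1 : Matrix (Fin m) (Fin m) ℂ)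
      + (1 : Matrix (Fin n) (Fin n) ℂ) ⊗ₖ hE)
    (v : Matrix (Fin n × Fin m) (Fin n × Fin m) ℂ) (hv : v.IsHermitian)
    (hH1 : HypH1 hE v)
    (ES : Matrix (Fin n × Fin m) (Fin n × Fin m) ℂ →L[ℂ] Matrix (Fin n) (Fin n) ℂ)
    (hES : ∀ (x : Matrix (Fin n) (Fin n) ℂ) (y : Matrix (Fin m) (Fin m) ℂ),
      ES (x ⊗ₖ y) = gibbsState β hE y • x)
    (lam τ : ℝ) (hτ : 0 < τ) :
    Tred ES h v (-lam) τ = Tred ES h v lam τ := by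
  obtain ⟨p0, hp0herm, hp0idem, hp0comm, hvdec⟩ := hH1
  set w : Matrix (Fin m) (Fin m) ℂ := (2:ℂ) • p0 - 1 with hwdef
  have hw2 : w * w = 1 := by
    have h1 : w * w = (4:ℂ) • (p0 * p0) - (4:ℂ) • p0 + 1 := by
      rw [hwdef]
      simp only [sub_mul, mul_sub, smul_mul_assoc, mul_smul_comm, one_mul, mul_one, smul_smul]
      module
    rw [h1, hp0idem]
    module
  have hwE : w * hE = hE * w := by
    rw [hwdef]
    simp only [sub_mul, mul_sub, smul_mul_assoc, mul_smul_comm, one_mul, mul_one, hp0comm]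
  have hwp : w * p0 = p0 := by
    rw [hwdef]
    simp only [sub_mul, smul_mul_assoc, one_mul, hp0idem]
    module
  have hpw : p0 * w = p0 := by
    rw [hwdef]
    simp only [mul_sub, mul_smul_comm, mul_one, hp0idem]
    module
  have hwq : w * (1 - p0) = -(1 - p0) := by
    rw [hwdef]
    simp only [mul_sub, sub_mul, smul_mul_assoc, mul_smul_comm, one_mul, mul_one, hp0idem]
    module
  have hqw : (1 - p0) * w = -(1 - p0) := by
    rw [hwdef]
    simp only [mul_sub, sub_mul, smul_mul_assoc, mul_smul_comm, one_mul, mul_one, hp0idem]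
    module
  set W : Matrix (Fin n × Fin m) (Fin n × Fin m) ℂ
    := (1 : Matrix (Fin n) (Fin n) ℂ) ⊗ₖ w with hWdef
  have hW2 : W * W = 1 := by
    rw [hWdef, ← Matrix.mul_kronecker_mul, one_mul, hw2, Matrix.one_kronecker_one]
  have hWh : W * h = h * W := by
    rw [hWdef, hdef, mul_add, add_mul, ← Matrix.mul_kronecker_mul, ← Matrix.mul_kronecker_mul,
      ← Matrix.mul_kronecker_mul, ← Matrix.mul_kronecker_mul, hwE]
    simp
  have hWhW : W * h * W = h := by
    rw [hWh, mul_assoc, hW2, mul_one]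
  have hWP : W * ((1 : Matrix (Fin n) (Fin n) ℂ) ⊗ₖ p0)
      = (1 : Matrix (Fin n) (Fin n) ℂ) ⊗ₖ p0 := by
    rw [hWdef, ← Matrix.mul_kronecker_mul, one_mul, hwp]
  have hPW : ((1 : Matrix (Fin n) (Fin n) ℂ) ⊗ₖ p0) * W
      = (1 : Matrix (Fin n) (Fin n) ℂ) ⊗ₖ p0 := by
    rw [hWdef, ← Matrix.mul_kronecker_mul, one_mul, hpw]
  have hWQ : W * ((1 : Matrix (Fin n) (Fin n) ℂ) ⊗ₖ (1 - p0))
      = -((1 : Matrix (Fin n) (Fin n) ℂ) ⊗ₖ (1 - p0)) := by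
    rw [hWdef, ← Matrix.mul_kronecker_mul, one_mul, hwq, one_kron_neg]
  have hQW : ((1 : Matrix (Fin n) (Fin n) ℂ) ⊗ₖ (1 - p0)) * W
      = -((1 : Matrix (Fin n) (Fin n) ℂ) ⊗ₖ (1 - p0)) := by
    rw [hWdef, ← Matrix.mul_kronecker_mul, one_mul, hqw, one_kron_neg]
  have hWv : W * v * W = -v := by
    have expand : W * (((1 : Matrix (Fin n) (Fin n) ℂ) ⊗ₖ p0) * v
          * ((1 : Matrix (Fin n) (Fin n) ℂ) ⊗ₖ (1 - p0))
        + ((1 : Matrix (Fin n) (Fin n) ℂ) ⊗ₖ (1 - p0)) * v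
          * ((1 : Matrix (Fin n) (Fin n) ℂ) ⊗ₖ p0)) * W
        = (W * ((1 : Matrix (Fin n) (Fin n) ℂ) ⊗ₖ p0)) * v
            * (((1 : Matrix (Fin n) (Fin n) ℂ) ⊗ₖ (1 - p0)) * W)
        + (W * ((1 : Matrix (Fin n) (Fin n) ℂ) ⊗ₖ (1 - p0))) * v
            * (((1 : Matrix (Fin n) (Fin n) ℂ) ⊗ₖ p0) * W) := by noncomm_ring
    conv_lhs => rw [hvdec]
    rw [expand, hWP, hQW, hWQ, hPW, mul_neg, neg_mul, neg_mul, ← neg_add, ← hvdec]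
  -- the conjugation as a continuous linear map, and its algebraic properties
  have hCC : conjCLM W * conjCLM W = 1 := by
    refine ContinuousLinearMap.ext fun x => ?_
    simp only [ContinuousLinearMap.mul_apply, ContinuousLinearMap.one_apply, conjCLM_apply]
    have h1 : W * (W * x * W) * W = (W * W) * x * (W * W) := by noncomm_ring
    rw [h1, hW2, one_mul, mul_one]
  have hgen : (τ : ℂ) • (Complex.I • adC h + ((Complex.I * ((-lam : ℝ) : ℂ)) • adC v))
      = conjCLM W * ((τ : ℂ) • (Complex.I • adC h + ((Complex.I * (lam : ℝ)) • adC v)))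
        * conjCLM W := by
    refine ContinuousLinearMap.ext fun x => ?_
    simp only [ContinuousLinearMap.mul_apply, ContinuousLinearMap.smul_apply,
      ContinuousLinearMap.add_apply, adC_apply, conjCLM_apply, mul_smul_comm,
      smul_mul_assoc, mul_add, add_mul]
    have e1 : W * (h * (W * x * W) - (W * x * W) * h) * W = h * x - x * h := by
      rw [conj_sandwich W h x hW2, hWhW]
    have e2 : W * (v * (W * x * W) - (W * x * W) * v) * W = -(v * x - x * v) := by
      rw [conj_sandwich W v x hW2, hWv]
      noncomm_ring
    rw [e1, e2, Complex.ofReal_neg, mul_neg, neg_smul, ← smul_neg]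
  have key : phiSE h v (-lam) τ = conjCLM W * phiSE h v lam τ * conjCLM W := by
    unfold phiSE
    rw [hgen]
    exact exp_conj_clm (conjCLM W) (conjCLM W) _ hCC hCC
  -- Gibbs state invariance under conjugation by w
  have hew : exp ((-β : ℂ) • hE) * w = w * exp ((-β : ℂ) • hE) := by
    have hc : Commute w hE := hwE
    exact (((hc.smul_right ((-β : ℂ))).exp_right)).symm.eq
  have hgibbs : ∀ b : Matrix (Fin m) (Fin m) ℂ,
      gibbsState β hE (w * b * w) = gibbsState β hE b := by
    intro b
    unfold gibbsState
    congr 1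
    set e := exp ((-β : ℂ) • hE) with hedef
    have h3 : e * (w * b * w) = (e * w) * (b * w) := by noncomm_ring
    rw [h3, hew]
    have h4 : (w * e) * (b * w) = w * ((e * b) * w) := by noncomm_ring
    rw [h4, Matrix.trace_mul_comm w ((e * b) * w), mul_assoc, hw2, mul_one]
  -- E_S absorbs the conjugation
  have hESC : ES.comp (conjCLM W) = ES := by
    refine clm_ext_kron _ _ fun a b => ?_
    have hk : W * (a ⊗ₖ b) * W = a ⊗ₖ (w * b * w) := by
      rw [hWdef, ← Matrix.mul_kronecker_mul, ← Matrix.mul_kronecker_mul, one_mul, mul_one]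
    rw [ContinuousLinearMap.comp_apply, conjCLM_apply, hk, hES, hES, hgibbs]
  -- the embedding is fixed by the conjugation
  have hfix : ∀ x : Matrix (Fin n) (Fin n) ℂ,
      W * (x ⊗ₖ (1 : Matrix (Fin m) (Fin m) ℂ)) * W
        = x ⊗ₖ (1 : Matrix (Fin m) (Fin m) ℂ) := by
    intro x
    rw [hWdef, ← Matrix.mul_kronecker_mul, ← Matrix.mul_kronecker_mul]
    simp [hw2]
  -- put everything together
  refine ContinuousLinearMap.ext fun x => ?_
  have hincl : inclS n m x = x ⊗ₖ (1 : Matrix (Fin m) (Fin m) ℂ) := rfl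
  simp only [Tred, ContinuousLinearMap.comp_apply, key, ContinuousLinearMap.mul_apply]
  rw [hincl, conjCLM_apply, conjCLM_apply, hfix]
  have h5 := ContinuousLinearMap.ext_iff.mp hESC
    ((phiSE h v lam τ) (x ⊗ₖ (1 : Matrix (Fin m) (Fin m) ℂ)))
  simpa [ContinuousLinearMap.comp_apply, conjCLM_apply] using h5
end
end

section
/- Let X be a Banach space, δ ∈ B(X) such that exp(t·δ) is an isometry for every t ∈ ℝ, and A1 ∈ B(X). Fix constants λ0, τ0, C0, s0 > 0. Call a pair (λ,τ) ∈ ℝ × ℝ admissible if τ ∈ [0,τ0] and λ²τ ∈ [0, λ0²τ0]. Suppose T is a family of operators T(λ,τ) ∈ B(X), defined for admissible pairs, satisfying ‖ T(λ,τ) − (Id + λ²τ²·A1) ∘ exp(τ·δ) ‖ ≤ C0·λ²τ³ for all admissible (λ,τ). Then there exists a constant C ≥ 0, depending only on C0, λ0, τ0, s0 and ‖A1‖, such that for every admissible pair (λ,τ) with τ > 0 and every m ∈ ℕ with m·λ²τ² ≤ s0: ‖ T(λ,τ)^m − exp(m·τ·(δ + λ²τ·A1)) ‖ ≤ C·τ.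 -/
open Filter Topology NormedSpace

section vanHoveAux
set_option linter.unusedSectionVars false
variable {X : Type*} [NormedAddCommGroup X] [NormedSpace ℝ X] [CompleteSpace X]
variable (δ : X →L[ℝ] X)
open Set
variable {X : Type*} [NormedAddCommGroup X] [NormedSpace ℝ X] [CompleteSpace X]
variable (δ : X →L[ℝ] X)

lemma vh_iso_mul_norm (hiso : ∀ (t : ℝ) (x : X), ‖exp (t • δ) x‖ = ‖x‖)
    (t : ℝ) (M : X →L[ℝ] X) : ‖exp (t • δ) * M‖ = ‖M‖ := by
  apply le_antisymm
  · apply ContinuousLinearMap.opNorm_le_bound _ (norm_nonneg M)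
    intro x
    show ‖exp (t • δ) (M x)‖ ≤ _
    rw [hiso]
    exact M.le_opNorm x
  · apply ContinuousLinearMap.opNorm_le_bound _ (norm_nonneg _)
    intro x
    calc ‖M x‖ = ‖exp (t • δ) (M x)‖ := (hiso t (M x)).symm
    _ = ‖(exp (t • δ) * M) x‖ := rfl
    _ ≤ ‖exp (t • δ) * M‖ * ‖x‖ := ContinuousLinearMap.le_opNorm _ x

lemma vh_norm_exp_le_one (hiso : ∀ (t : ℝ) (x : X), ‖exp (t • δ) x‖ = ‖x‖)
    (t : ℝ) : ‖exp (t • δ)‖ ≤ 1 := by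
  have h := vh_iso_mul_norm δ hiso t 1
  rw [mul_one] at h
  rw [h, ContinuousLinearMap.one_def]
  exact ContinuousLinearMap.norm_id_le

set_option synthInstance.maxHeartbeats 400000 in
lemma vh_hasDerivAt_w (B : X →L[ℝ] X) (t s : ℝ) :
    HasDerivAt (fun s : ℝ => exp ((t - s) • δ) * exp (s • (δ + B)))
      (exp ((t - s) • δ) * (B * exp (s • (δ + B)))) s := by
  have h2 : HasDerivAt (fun s : ℝ => t - s) (-1) s := by
    simpa using (hasDerivAt_id s).const_sub t
  have hc : HasDerivAt (fun s : ℝ => exp ((t - s) • δ))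
      ((-1 : ℝ) • (δ * exp ((t - s) • δ))) s :=
    HasDerivAt.scomp s (hasDerivAt_exp_smul_const' δ (t - s)) h2
  have hd : HasDerivAt (fun s : ℝ => exp (s • (δ + B)))
      ((δ + B) * exp (s • (δ + B))) s := hasDerivAt_exp_smul_const' (δ + B) s
  have hmul := hc.mul hd
  convert hmul using 1
  iterate 4 rfl
  letI : NormedAlgebra ℚ (X →L[ℝ] X) := NormedAlgebra.restrictScalars ℚ ℝ _
  have key : Commute (exp ((t - s) • δ)) δ :=
    Commute.exp_left ((Commute.refl δ).smul_left (t - s))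
  have keq : exp ((t - s) • δ) * δ = δ * exp ((t - s) • δ) := key.eq
  rw [neg_smul, one_smul, ← keq]
  noncomm_ring

lemma vh_norm_exp_add_le (hiso : ∀ (t : ℝ) (x : X), ‖exp (t • δ) x‖ = ‖x‖)
    (B : X →L[ℝ] X) {t : ℝ} (ht : 0 ≤ t) :
    ‖exp (t • (δ + B))‖ ≤ Real.exp (‖B‖ * t) := by
  set w : ℝ → (X →L[ℝ] X) := fun s => exp ((t - s) • δ) * exp (s • (δ + B)) with hw
  have hderiv : ∀ s : ℝ, HasDerivAt w
      (exp ((t - s) • δ) * (B * exp (s • (δ + B)))) s := vh_hasDerivAt_w δ B t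
  have hcont : ContinuousOn w (Icc 0 t) :=
    fun s _ => (hderiv s).continuousAt.continuousWithinAt
  have hderiv' : ∀ s ∈ Ico (0:ℝ) t, HasDerivWithinAt w
      (exp ((t - s) • δ) * (B * exp (s • (δ + B)))) (Ici s) s :=
    fun s _ => (hderiv s).hasDerivWithinAt
  have h0 : ‖w 0‖ ≤ 1 := by
    simp only [hw, sub_zero, zero_smul, exp_zero, mul_one]
    exact vh_norm_exp_le_one δ hiso t
  have hbound : ∀ s ∈ Ico (0:ℝ) t,
      ‖exp ((t - s) • δ) * (B * exp (s • (δ + B)))‖ ≤ ‖B‖ * ‖w s‖ + 0 := by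
    intro s _
    rw [vh_iso_mul_norm δ hiso, add_zero]
    calc ‖B * exp (s • (δ + B))‖ ≤ ‖B‖ * ‖exp (s • (δ + B))‖ := norm_mul_le _ _
    _ = ‖B‖ * ‖w s‖ := by rw [hw]; rw [vh_iso_mul_norm δ hiso]
  have := norm_le_gronwallBound_of_norm_deriv_right_le hcont hderiv' h0 hbound t
    (right_mem_Icc.2 ht)
  rw [gronwallBound_ε0, sub_zero, one_mul] at this
  have hwt : w t = exp (t • (δ + B)) := by
    simp only [hw, sub_self, zero_smul, exp_zero, one_mul]
  rwa [hwt] at this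


lemma vh_exp_diff_le (hiso : ∀ (t : ℝ) (x : X), ‖exp (t • δ) x‖ = ‖x‖)
    (B : X →L[ℝ] X) {t : ℝ} (ht : 0 ≤ t) :
    ‖exp (t • (δ + B)) - exp (t • δ)‖ ≤ ‖B‖ * Real.exp (‖B‖ * t) * t := by
  set w : ℝ → (X →L[ℝ] X) := fun s => exp ((t - s) • δ) * exp (s • (δ + B)) with hw
  have hderiv : ∀ s ∈ Icc (0:ℝ) t, HasDerivWithinAt w
      (exp ((t - s) • δ) * (B * exp (s • (δ + B)))) (Icc 0 t) s :=
    fun s _ => (vh_hasDerivAt_w δ B t s).hasDerivWithinAt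
  have hbound : ∀ s ∈ Ico (0:ℝ) t,
      ‖exp ((t - s) • δ) * (B * exp (s • (δ + B)))‖ ≤ ‖B‖ * Real.exp (‖B‖ * t) := by
    intro s hs
    rw [vh_iso_mul_norm δ hiso]
    calc ‖B * exp (s • (δ + B))‖ ≤ ‖B‖ * ‖exp (s • (δ + B))‖ := norm_mul_le _ _
    _ ≤ ‖B‖ * Real.exp (‖B‖ * s) :=
        mul_le_mul_of_nonneg_left (vh_norm_exp_add_le δ hiso B hs.1) (norm_nonneg B)
    _ ≤ ‖B‖ * Real.exp (‖B‖ * t) := by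
        apply mul_le_mul_of_nonneg_left _ (norm_nonneg B)
        exact Real.exp_le_exp.2 (mul_le_mul_of_nonneg_left hs.2.le (norm_nonneg B))
  have h := norm_image_sub_le_of_norm_deriv_le_segment' hderiv hbound t (right_mem_Icc.2 ht)
  have hwt : w t = exp (t • (δ + B)) := by
    simp only [hw, sub_self, zero_smul, exp_zero, one_mul]
  have hw0 : w 0 = exp (t • δ) := by
    simp only [hw, sub_zero, zero_smul, exp_zero, mul_one]
  rw [hwt, hw0, sub_zero] at h
  exact h

/-- `‖exp (t • δ) - 1‖ ≤ ‖δ‖ t` for the isometric group. -/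
lemma vh_exp_sub_one_le (hiso : ∀ (t : ℝ) (x : X), ‖exp (t • δ) x‖ = ‖x‖)
    {t : ℝ} (ht : 0 ≤ t) : ‖exp (t • δ) - 1‖ ≤ ‖δ‖ * t := by
  have hderiv : ∀ s ∈ Icc (0:ℝ) t, HasDerivWithinAt (fun s : ℝ => exp (s • δ))
      (exp (s • δ) * δ) (Icc 0 t) s :=
    fun s _ => (hasDerivAt_exp_smul_const δ s).hasDerivWithinAt
  have hbound : ∀ s ∈ Ico (0:ℝ) t, ‖exp (s • δ) * δ‖ ≤ ‖δ‖ :=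
    fun s _ => le_of_eq (vh_iso_mul_norm δ hiso s δ)
  have h := norm_image_sub_le_of_norm_deriv_le_segment' hderiv hbound t (right_mem_Icc.2 ht)
  simpa [exp_zero] using h

set_option maxHeartbeats 1000000 in
set_option synthInstance.maxHeartbeats 400000 in
lemma vh_remainder (hiso : ∀ (t : ℝ) (x : X), ‖exp (t • δ) x‖ = ‖x‖)
    (A1 : X →L[ℝ] X) {ε τ : ℝ} (hε : 0 ≤ ε) (hτ : 0 ≤ τ) :
    ‖exp (τ • (δ + ε • A1)) - (1 + (ε * τ) • A1) * exp (τ • δ)‖ ≤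
      ε * τ * τ * (ε * ‖A1‖ ^ 2 * Real.exp (ε * ‖A1‖ * τ) + 2 * ‖A1‖ * ‖δ‖) := by
  set B : X →L[ℝ] X := ε • A1 with hB
  have hBnorm : ‖B‖ = ε * ‖A1‖ := by
    rw [hB, norm_smul ε A1, Real.norm_of_nonneg hε]
  set E : X →L[ℝ] X := exp (τ • δ) with hE
  set g : ℝ → (X →L[ℝ] X) :=
    fun s => exp ((τ - s) • δ) * exp (s • (δ + B)) - (1 + (ε * s) • A1) * E with hg
  have hderiv : ∀ s : ℝ, HasDerivAt g
      (exp ((τ - s) • δ) * (B * exp (s • (δ + B))) - B * E) s := by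
    intro s
    have h1 := vh_hasDerivAt_w δ B τ s
    have h2 : HasDerivAt (fun s : ℝ => (1 + (ε * s) • A1) * E) (B * E) s := by
      have hs : HasDerivAt (fun s : ℝ => ε * s) ε s := by
        simpa using (hasDerivAt_id s).const_mul ε
      have := ((hs.smul_const A1).const_add 1).mul_const E
      simpa [hB] using this
    exact h1.sub h2
  -- bound on the derivative
  set C : ℝ := ε * τ * (ε * ‖A1‖ ^ 2 * Real.exp (ε * ‖A1‖ * τ) + 2 * ‖A1‖ * ‖δ‖) with hC
  have hbound : ∀ s ∈ Ico (0:ℝ) τ,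
      ‖exp ((τ - s) • δ) * (B * exp (s • (δ + B))) - B * E‖ ≤ C := by
    intro s hs
    have hs0 : 0 ≤ s := hs.1
    have hsτ : s ≤ τ := hs.2.le
    have hτs : 0 ≤ τ - s := sub_nonneg.2 hsτ
    set Eτs : X →L[ℝ] X := exp ((τ - s) • δ) with hEτs
    set Es : X →L[ℝ] X := exp (s • δ) with hEs
    set Ds : X →L[ℝ] X := exp (s • (δ + B)) with hDs
    have hEsplit : E = Eτs * Es := by
      letI : NormedAlgebra ℚ (X →L[ℝ] X) := NormedAlgebra.restrictScalars ℚ ℝ _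
      rw [hE, hEτs, hEs, ← exp_add_of_commute (((Commute.refl δ).smul_left (τ - s)).smul_right s),
        ← add_smul, sub_add_cancel]
    have hsplit : Eτs * (B * Ds) - B * E =
        Eτs * (B * (Ds - Es)) + (Eτs * B - B * Eτs) * Es := by
      rw [hEsplit]; noncomm_ring
    rw [hsplit]
    have hterm1 : ‖Eτs * (B * (Ds - Es))‖ ≤ ε * ‖A1‖ * (ε * ‖A1‖ * Real.exp (ε * ‖A1‖ * τ) * τ) := by
      rw [hEτs, vh_iso_mul_norm δ hiso]
      calc ‖B * (Ds - Es)‖ ≤ ‖B‖ * ‖Ds - Es‖ := norm_mul_le _ _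
      _ ≤ ε * ‖A1‖ * (ε * ‖A1‖ * Real.exp (ε * ‖A1‖ * τ) * τ) := by
          rw [hBnorm]
          apply mul_le_mul_of_nonneg_left _ (by positivity)
          have := vh_exp_diff_le δ hiso B hs0
          rw [hBnorm] at this
          calc ‖Ds - Es‖ ≤ ε * ‖A1‖ * Real.exp (ε * ‖A1‖ * s) * s := this
          _ ≤ ε * ‖A1‖ * Real.exp (ε * ‖A1‖ * τ) * τ := by
              have he : Real.exp (ε * ‖A1‖ * s) ≤ Real.exp (ε * ‖A1‖ * τ) :=
                Real.exp_le_exp.2 (mul_le_mul_of_nonneg_left hsτ (by positivity))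
              have h1 : (0:ℝ) ≤ ε * ‖A1‖ := by positivity
              exact mul_le_mul (mul_le_mul_of_nonneg_left he h1) hsτ hs0 (by positivity)
    have hcomm : ‖Eτs * B - B * Eτs‖ ≤ 2 * (ε * ‖A1‖) * (‖δ‖ * (τ - s)) := by
      have hid : Eτs * B - B * Eτs = (Eτs - 1) * B - B * (Eτs - 1) := by noncomm_ring
      rw [hid]
      have h1 : ‖Eτs - 1‖ ≤ ‖δ‖ * (τ - s) := vh_exp_sub_one_le δ hiso hτs
      calc ‖(Eτs - 1) * B - B * (Eτs - 1)‖
          ≤ ‖(Eτs - 1) * B‖ + ‖B * (Eτs - 1)‖ := norm_sub_le _ _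
      _ ≤ ‖Eτs - 1‖ * ‖B‖ + ‖B‖ * ‖Eτs - 1‖ := add_le_add (norm_mul_le _ _) (norm_mul_le _ _)
      _ ≤ (‖δ‖ * (τ - s)) * (ε * ‖A1‖) + (ε * ‖A1‖) * (‖δ‖ * (τ - s)) := by
          rw [hBnorm]
          have hb : (0:ℝ) ≤ ε * ‖A1‖ := by positivity
          have hd : (0:ℝ) ≤ ‖δ‖ * (τ - s) := by positivity
          exact add_le_add (mul_le_mul_of_nonneg_right h1 hb) (mul_le_mul_of_nonneg_left h1 hb)
      _ = 2 * (ε * ‖A1‖) * (‖δ‖ * (τ - s)) := by ring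
    have hterm2 : ‖(Eτs * B - B * Eτs) * Es‖ ≤ 2 * (ε * ‖A1‖) * (‖δ‖ * (τ - s)) := by
      calc ‖(Eτs * B - B * Eτs) * Es‖ ≤ ‖Eτs * B - B * Eτs‖ * ‖Es‖ := norm_mul_le _ _
      _ ≤ (2 * (ε * ‖A1‖) * (‖δ‖ * (τ - s))) * 1 := by
          apply mul_le_mul hcomm (vh_norm_exp_le_one δ hiso s) (norm_nonneg _)
          positivity
      _ = 2 * (ε * ‖A1‖) * (‖δ‖ * (τ - s)) := mul_one _
    calc ‖Eτs * (B * (Ds - Es)) + (Eτs * B - B * Eτs) * Es‖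
        ≤ ‖Eτs * (B * (Ds - Es))‖ + ‖(Eτs * B - B * Eτs) * Es‖ := norm_add_le _ _
    _ ≤ ε * ‖A1‖ * (ε * ‖A1‖ * Real.exp (ε * ‖A1‖ * τ) * τ) +
          2 * (ε * ‖A1‖) * (‖δ‖ * (τ - s)) := add_le_add hterm1 hterm2
    _ ≤ C := by
        rw [hC]
        have h2 : ‖δ‖ * (τ - s) ≤ ‖δ‖ * τ := mul_le_mul_of_nonneg_left (by linarith) (norm_nonneg _)
        nlinarith [norm_nonneg A1, norm_nonneg δ, Real.exp_pos (ε * ‖A1‖ * τ),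
          mul_le_mul_of_nonneg_left h2 (mul_nonneg (by positivity : (0:ℝ) ≤ 2 * (ε * ‖A1‖)) le_rfl |> fun _ => (by positivity : (0:ℝ) ≤ 2 * (ε * ‖A1‖)))]
  have hderivW : ∀ s ∈ Icc (0:ℝ) τ, HasDerivWithinAt g
      (exp ((τ - s) • δ) * (B * exp (s • (δ + B))) - B * E) (Icc 0 τ) s :=
    fun s _ => (hderiv s).hasDerivWithinAt
  have h := norm_image_sub_le_of_norm_deriv_le_segment' hderivW hbound τ (right_mem_Icc.2 hτ)
  have hg0 : g 0 = 0 := by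
    simp only [hg, sub_zero, zero_smul, exp_zero, mul_one, mul_zero, one_mul, add_zero, hE,
      sub_self]
  have hgτ : g τ = exp (τ • (δ + B)) - (1 + (ε * τ) • A1) * E := by
    simp only [hg, sub_self, zero_smul, exp_zero, one_mul]
  rw [hg0, hgτ, sub_zero] at h
  calc ‖exp (τ • (δ + ε • A1)) - (1 + (ε * τ) • A1) * exp (τ • δ)‖
      ≤ C * (τ - 0) := h
  _ = ε * τ * τ * (ε * ‖A1‖ ^ 2 * Real.exp (ε * ‖A1‖ * τ) + 2 * ‖A1‖ * ‖δ‖) := by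
      rw [hC]; ring


end vanHoveAux


lemma vh_telescope {𝔸 : Type*} [NormedRing 𝔸] (T S : 𝔸) (a D : ℝ)
    (hone : ‖(1:𝔸)‖ ≤ 1)
    (hT : ‖T‖ ≤ a) (hS : ‖S‖ ≤ a) (ha : 1 ≤ a) (hD : ‖T - S‖ ≤ D) (hDnn : 0 ≤ D) :
    ∀ n : ℕ, ‖T ^ n - S ^ n‖ ≤ n * a ^ n * D := by
  have ha0 : (0:ℝ) ≤ a := le_trans zero_le_one ha
  have hSn : ∀ k : ℕ, ‖S ^ k‖ ≤ a ^ k := by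
    intro k
    induction k with
    | zero => simpa using hone
    | succ k ihk =>
      rw [pow_succ, pow_succ]
      exact le_trans (norm_mul_le _ _) (mul_le_mul ihk hS (norm_nonneg _) (pow_nonneg ha0 k))
  intro n
  induction n with
  | zero => simp
  | succ n ih =>
    have hid : T ^ (n+1) - S ^ (n+1) = (T ^ n - S ^ n) * T + S ^ n * (T - S) := by
      rw [pow_succ, pow_succ]; noncomm_ring
    rw [hid]
    have h1 : ‖(T ^ n - S ^ n) * T‖ ≤ ((n : ℝ) * a ^ n * D) * a :=
      le_trans (norm_mul_le _ _)
        (mul_le_mul ih hT (norm_nonneg _)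
          (mul_nonneg (mul_nonneg (Nat.cast_nonneg n) (pow_nonneg ha0 n)) hDnn))
    have h2 : ‖S ^ n * (T - S)‖ ≤ a ^ n * D :=
      le_trans (norm_mul_le _ _)
        (mul_le_mul (hSn n) hD (norm_nonneg _) (pow_nonneg ha0 n))
    have hpow : a ^ n ≤ a ^ (n+1) := pow_le_pow_right₀ ha (Nat.le_succ n)
    calc ‖(T ^ n - S ^ n) * T + S ^ n * (T - S)‖
        ≤ ‖(T ^ n - S ^ n) * T‖ + ‖S ^ n * (T - S)‖ := norm_add_le _ _
    _ ≤ ((n : ℝ) * a ^ n * D) * a + a ^ n * D := add_le_add h1 h2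
    _ ≤ ((n:ℝ) + 1) * a ^ (n+1) * D := by
        have hD2 : a ^ n * D ≤ a ^ (n+1) * D := mul_le_mul_of_nonneg_right hpow hDnn
        have he : ((n : ℝ) * a ^ n * D) * a = (n:ℝ) * a ^ (n+1) * D := by ring
        linarith [he]
    _ = ((n+1 : ℕ) : ℝ) * a ^ (n+1) * D := by push_cast; ring


set_option maxHeartbeats 1000000 in
set_option synthInstance.maxHeartbeats 400000 in
/-- **Telescoping estimate for the van Hove limit in the regime `τ → 0`, `λ²τ → 0`.**
Let `δ ∈ B(X)` generate a group of isometries and `A1 ∈ B(X)`.  Fix `λ0, τ0, C0, s0 > 0`; a pair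
`(λ,τ)` is admissible if `τ ∈ [0,τ0]` and `λ²τ ∈ [0,λ0²τ0]`.  If `T(λ,τ) ∈ B(X)` satisfies
`‖T(λ,τ) − (Id + λ²τ² A1) ∘ exp(τδ)‖ ≤ C0 λ²τ³` for all admissible pairs, then there is a
constant `C ≥ 0` (depending only on `C0, λ0, τ0, s0` and `A1`) with
`‖T(λ,τ)^m − exp(mτ(δ + λ²τ A1))‖ ≤ C τ` for all admissible `(λ,τ)` with `τ > 0` and all
`m ∈ ℕ` with `m λ²τ² ≤ s0`. -/
theorem van_hove_telescoping_estimate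
    {X : Type*} [NormedAddCommGroup X] [NormedSpace ℝ X] [CompleteSpace X]
    (δ A1 : X →L[ℝ] X)
    (hiso : ∀ (t : ℝ) (x : X), ‖exp (t • δ) x‖ = ‖x‖)
    (lam0 tau0 C0 s0 : ℝ)
    (hlam0 : 0 < lam0) (htau0 : 0 < tau0) (hC0 : 0 < C0) (hs0 : 0 < s0) :
    ∃ C : ℝ, 0 ≤ C ∧
      ∀ T : ℝ → ℝ → X →L[ℝ] X,
        (∀ lam tau : ℝ, tau ∈ Set.Icc (0:ℝ) tau0 →
            lam ^ 2 * tau ∈ Set.Icc (0:ℝ) (lam0 ^ 2 * tau0) →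
          ‖T lam tau
              - (ContinuousLinearMap.id ℝ X + (lam ^ 2 * tau ^ 2) • A1) ∘L exp (tau • δ)‖ ≤
            C0 * lam ^ 2 * tau ^ 3) →
        ∀ lam tau : ℝ, tau ∈ Set.Icc (0:ℝ) tau0 →
            lam ^ 2 * tau ∈ Set.Icc (0:ℝ) (lam0 ^ 2 * tau0) → 0 < tau →
          ∀ m : ℕ, (m : ℝ) * lam ^ 2 * tau ^ 2 ≤ s0 →
            ‖(T lam tau) ^ m - exp (((m : ℝ) * tau) • (δ + (lam ^ 2 * tau) • A1))‖ ≤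
              C * tau := by
  set K1 : ℝ := lam0 ^ 2 * tau0 * ‖A1‖ ^ 2 * Real.exp (lam0 ^ 2 * tau0 * ‖A1‖ * tau0)
      + 2 * ‖A1‖ * ‖δ‖ with hK1
  have hK1nn : 0 ≤ K1 := by positivity
  set K2 : ℝ := C0 + K1 with hK2
  have hK2nn : 0 ≤ K2 := by rw [hK2]; linarith
  set β : ℝ := ‖A1‖ + K2 * tau0 with hβ
  have hβnn : 0 ≤ β := by
    rw [hβ]
    exact add_nonneg (norm_nonneg _) (mul_nonneg hK2nn htau0.le)
  refine ⟨Real.exp (s0 * β) * K2 * s0, by positivity, ?_⟩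
  intro T hT lam tau hτm hltm hτpos m hm
  obtain ⟨hτ0, hττ0⟩ := hτm
  obtain ⟨hε0, hεmax⟩ := hltm
  set S : X →L[ℝ] X := exp (tau • (δ + (lam ^ 2 * tau) • A1)) with hSdef
  -- rewrite the target exponential as S ^ m
  have hexp : exp (((m : ℝ) * tau) • (δ + (lam ^ 2 * tau) • A1)) = S ^ m := by
    letI : NormedAlgebra ℚ (X →L[ℝ] X) := NormedAlgebra.restrictScalars ℚ ℝ _
    rw [mul_smul, Nat.cast_smul_eq_nsmul ℝ m, exp_nsmul, hSdef]
  -- norm bound for S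
  have hnormB : ‖(lam ^ 2 * tau) • A1‖ = lam ^ 2 * tau * ‖A1‖ := by
    rw [norm_smul (lam ^ 2 * tau) A1, Real.norm_of_nonneg hε0]
  have hS2 : ‖S‖ ≤ Real.exp (lam ^ 2 * tau ^ 2 * ‖A1‖) := by
    have h := vh_norm_exp_add_le δ hiso ((lam ^ 2 * tau) • A1) hτ0
    rw [hnormB] at h
    rw [hSdef]
    refine h.trans (le_of_eq ?_)
    congr 1; ring
  -- distance between T and S
  have hPid : (ContinuousLinearMap.id ℝ X + (lam ^ 2 * tau ^ 2) • A1) ∘L exp (tau • δ)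
      = (1 + (lam ^ 2 * tau * tau) • A1) * exp (tau • δ) := by
    have h1 : lam ^ 2 * tau * tau = lam ^ 2 * tau ^ 2 := by ring
    rw [h1]; rfl
  have hPS : ‖S - (ContinuousLinearMap.id ℝ X + (lam ^ 2 * tau ^ 2) • A1) ∘L exp (tau • δ)‖
      ≤ K1 * (lam ^ 2 * tau ^ 3) := by
    rw [hPid, hSdef]
    refine (vh_remainder δ hiso A1 hε0 hτ0).trans ?_
    have hinner : lam ^ 2 * tau * ‖A1‖ ^ 2 * Real.exp (lam ^ 2 * tau * ‖A1‖ * tau)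
        + 2 * ‖A1‖ * ‖δ‖ ≤ K1 := by
      rw [hK1]
      gcongr
      all_goals first
        | exact hεmax
        | exact hττ0
    calc lam ^ 2 * tau * tau * tau *
          (lam ^ 2 * tau * ‖A1‖ ^ 2 * Real.exp (lam ^ 2 * tau * ‖A1‖ * tau) + 2 * ‖A1‖ * ‖δ‖)
        = (lam ^ 2 * tau ^ 3) *
          (lam ^ 2 * tau * ‖A1‖ ^ 2 * Real.exp (lam ^ 2 * tau * ‖A1‖ * tau) + 2 * ‖A1‖ * ‖δ‖) := by
          ring
    _ ≤ (lam ^ 2 * tau ^ 3) * K1 := by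
          apply mul_le_mul_of_nonneg_left hinner (by positivity)
    _ = K1 * (lam ^ 2 * tau ^ 3) := mul_comm _ _
  have hTP := hT lam tau ⟨hτ0, hττ0⟩ ⟨hε0, hεmax⟩
  have hDist : ‖T lam tau - S‖ ≤ K2 * (lam ^ 2 * tau ^ 3) := by
    have hsplit : T lam tau - S =
        (T lam tau - (ContinuousLinearMap.id ℝ X + (lam ^ 2 * tau ^ 2) • A1) ∘L exp (tau • δ))
        - (S - (ContinuousLinearMap.id ℝ X + (lam ^ 2 * tau ^ 2) • A1) ∘L exp (tau • δ)) := by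
      abel
    rw [hsplit]
    refine (norm_sub_le _ _).trans ?_
    have : C0 * lam ^ 2 * tau ^ 3 + K1 * (lam ^ 2 * tau ^ 3) = K2 * (lam ^ 2 * tau ^ 3) := by
      rw [hK2]; ring
    linarith [add_le_add hTP hPS]
  have hDnn : (0:ℝ) ≤ K2 * (lam ^ 2 * tau ^ 3) := mul_nonneg hK2nn (by positivity)
  -- norm bound for T
  set a : ℝ := Real.exp (lam ^ 2 * tau ^ 2 * β) with hadef
  have ha1 : 1 ≤ a := by
    rw [hadef]
    exact Real.one_le_exp (by positivity)
  have hSa : ‖S‖ ≤ a := by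
    refine hS2.trans ?_
    rw [hadef]
    apply Real.exp_le_exp.2
    apply mul_le_mul_of_nonneg_left _ (by positivity : (0:ℝ) ≤ lam ^ 2 * tau ^ 2)
    rw [hβ]
    exact le_add_of_nonneg_right (mul_nonneg hK2nn htau0.le)
  have hTa : ‖T lam tau‖ ≤ a := by
    have h2 : ‖T lam tau‖ ≤ ‖S‖ + K2 * (lam ^ 2 * tau ^ 3) := by
      have hx : T lam tau = S + (T lam tau - S) := by abel
      calc ‖T lam tau‖ = ‖S + (T lam tau - S)‖ := by rw [← hx]
      _ ≤ ‖S‖ + ‖T lam tau - S‖ := norm_add_le _ _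
      _ ≤ ‖S‖ + K2 * (lam ^ 2 * tau ^ 3) := by linarith [hDist]
    set y : ℝ := K2 * tau0 * (lam ^ 2 * tau ^ 2) with hy
    have hynn : 0 ≤ y := by
      rw [hy]
      exact mul_nonneg (mul_nonneg hK2nn htau0.le) (by positivity)
    have h3 : K2 * (lam ^ 2 * tau ^ 3) ≤ y := by
      rw [hy]
      have : K2 * (lam ^ 2 * tau ^ 3) = K2 * tau * (lam ^ 2 * tau ^ 2) := by ring
      rw [this]
      apply mul_le_mul_of_nonneg_right _ (by positivity : (0:ℝ) ≤ lam ^ 2 * tau ^ 2)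
      exact mul_le_mul_of_nonneg_left hττ0 hK2nn
    have e1 : (1:ℝ) ≤ Real.exp (lam ^ 2 * tau ^ 2 * ‖A1‖) := Real.one_le_exp (by positivity)
    have e2 : 1 + y ≤ Real.exp y := by linarith [Real.add_one_le_exp y]
    calc ‖T lam tau‖ ≤ ‖S‖ + K2 * (lam ^ 2 * tau ^ 3) := h2
    _ ≤ Real.exp (lam ^ 2 * tau ^ 2 * ‖A1‖) + y := by linarith [hS2]
    _ ≤ Real.exp (lam ^ 2 * tau ^ 2 * ‖A1‖) + Real.exp (lam ^ 2 * tau ^ 2 * ‖A1‖) * y := by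
        nlinarith [mul_le_mul_of_nonneg_right e1 hynn]
    _ = Real.exp (lam ^ 2 * tau ^ 2 * ‖A1‖) * (1 + y) := by ring
    _ ≤ Real.exp (lam ^ 2 * tau ^ 2 * ‖A1‖) * Real.exp y :=
        mul_le_mul_of_nonneg_left e2 (Real.exp_pos _).le
    _ = a := by
        rw [← Real.exp_add, hadef, hβ, hy]; congr 1; ring
  -- telescoping
  have hone : ‖(1 : X →L[ℝ] X)‖ ≤ 1 := by
    rw [ContinuousLinearMap.one_def]
    exact ContinuousLinearMap.norm_id_le
  have htel := vh_telescope (T lam tau) S a (K2 * (lam ^ 2 * tau ^ 3))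
    hone hTa hSa ha1 hDist hDnn m
  rw [hexp]
  refine htel.trans ?_
  -- final arithmetic
  have ham : a ^ m ≤ Real.exp (s0 * β) := by
    rw [hadef, ← Real.exp_nat_mul]
    apply Real.exp_le_exp.2
    have hq : (m:ℝ) * (lam ^ 2 * tau ^ 2 * β) = ((m:ℝ) * lam ^ 2 * tau ^ 2) * β := by ring
    rw [hq]
    exact mul_le_mul_of_nonneg_right hm hβnn
  have hqnn : (0:ℝ) ≤ (m:ℝ) * lam ^ 2 * tau ^ 2 := by positivity
  calc (m:ℝ) * a ^ m * (K2 * (lam ^ 2 * tau ^ 3))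
      = ((m:ℝ) * lam ^ 2 * tau ^ 2) * (a ^ m * (K2 * tau)) := by ring
  _ ≤ s0 * (a ^ m * (K2 * tau)) := by
      apply mul_le_mul_of_nonneg_right hm
      exact mul_nonneg (pow_nonneg (le_trans zero_le_one ha1) m) (mul_nonneg hK2nn hτ0)
  _ ≤ s0 * (Real.exp (s0 * β) * (K2 * tau)) := by
      apply mul_le_mul_of_nonneg_left _ hs0.le
      exact mul_le_mul_of_nonneg_right ham (mul_nonneg hK2nn hτ0)
  _ = Real.exp (s0 * β) * K2 * s0 * tau := by ring
end

section
/- Let d ≥ 1, ε0 > 0, and let T : (−ε0, ε0) → M_d(ℂ) be real-analytic with 1 ∈ spec T(ε) and ‖T(ε)‖ = 1 (ℓ²-operator norm) for all ε. Suppose that for every ε ∈ (0, ε0) the limit P(ε) := lim_{k→∞} T(ε)^k exists. Let P0 be the spectral projection of T(0) for the eigenvalue 1, i.e. the unique idempotent commuting with T(0) whose range is the generalized eigenspace ker (T(0) − 1)^d and such that T(0) − 1 restricted to ker P0 is invertible. Then: (1) 0 ∈ spec( P0 T'(0) P0 ), where T'(0) is the derivative of T at 0; and (2) if Q is the spectral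 projection of P0 T'(0) P0 for the eigenvalue 0 (characterized in the same way), then P0·Q = Q·P0. -/
open Filter Topology
open scoped Matrix Matrix.Norms.L2Operator

private lemma matrix_eq_of_mulVec' {d : ℕ} {A B : Matrix (Fin d) (Fin d) ℂ}
    (h : ∀ v, A *ᵥ v = B *ᵥ v) : A = B := by
  ext i j
  have := congrFun (h (Pi.single j 1)) i
  simpa [Matrix.mulVec_single_one] using this

private lemma mulVecLin_pow' {d : ℕ} (M : Matrix (Fin d) (Fin d) ℂ) (n : ℕ) :
    (M.mulVecLin) ^ n = (M ^ n).mulVecLin := by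
  induction n with
  | zero => simp; rfl
  | succ n ih =>
    rw [pow_succ, pow_succ, ih, Matrix.mulVecLin_mul]
    rfl

/-- **Analytic perturbation of a power-convergent matrix family, part 1.**
Let `T : (−ε0, ε0) → M_d(ℂ)` be real-analytic with `1 ∈ spec T(ε)` and `‖T(ε)‖ = 1`, and
suppose `T(ε)^k` converges as `k → ∞` for each `ε ∈ (0, ε0)`.  Let `P0` be the spectral
projection of `T(0)` at the eigenvalue `1` (idempotent, commuting with `T(0)`, range the
generalized eigenspace `ker (T(0)−1)^d`, with `T(0)−1` invertible on `ker P0`).  Then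
(1) `0 ∈ spec (P0 T'(0) P0)`, and (2) if `Q` is the spectral projection of `P0 T'(0) P0`
at the eigenvalue `0`, then `P0 Q = Q P0`. -/
theorem analytic_perturbation_spectral_projection_part1
    (d : ℕ) (hd : 1 ≤ d) (ε0 : ℝ) (hε0 : 0 < ε0)
    (T : ℝ → Matrix (Fin d) (Fin d) ℂ)
    (hT : AnalyticOnNhd ℝ T (Set.Ioo (-ε0) ε0))
    (hspec : ∀ ε ∈ Set.Ioo (-ε0) ε0, (1 : ℂ) ∈ spectrum ℂ (T ε))
    (hnorm : ∀ ε ∈ Set.Ioo (-ε0) ε0, ‖T ε‖ = 1)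
    (P : ℝ → Matrix (Fin d) (Fin d) ℂ)
    (hconv : ∀ ε ∈ Set.Ioo (0:ℝ) ε0, Tendsto (fun k : ℕ => T ε ^ k) atTop (𝓝 (P ε)))
    -- `P0` is the spectral projection of `T 0` for the eigenvalue `1`:
    (P0 : Matrix (Fin d) (Fin d) ℂ)
    (hP0idem : P0 * P0 = P0)
    (hP0comm : T 0 * P0 = P0 * T 0)
    (hP0range : LinearMap.range P0.mulVecLin = LinearMap.ker ((T 0 - 1).mulVecLin ^ d))
    (hP0inv : ∀ y ∈ LinearMap.ker P0.mulVecLin,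
      ∃! w, w ∈ LinearMap.ker P0.mulVecLin ∧ (T 0 - 1).mulVecLin w = y)
    -- `Q` is the spectral projection of `P0 * T'(0) * P0` for the eigenvalue `0`:
    (Q : Matrix (Fin d) (Fin d) ℂ)
    (hQidem : Q * Q = Q)
    (hQcomm : (P0 * deriv T 0 * P0) * Q = Q * (P0 * deriv T 0 * P0))
    (hQrange : LinearMap.range Q.mulVecLin =
      LinearMap.ker ((P0 * deriv T 0 * P0).mulVecLin ^ d))
    (hQinv : ∀ y ∈ LinearMap.ker Q.mulVecLin,
      ∃! w, w ∈ LinearMap.ker Q.mulVecLin ∧ (P0 * deriv T 0 * P0).mulVecLin w = y) :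
    (0 : ℂ) ∈ spectrum ℂ (P0 * deriv T 0 * P0) ∧ P0 * Q = Q * P0 := by
  have h0mem : (0:ℝ) ∈ Set.Ioo (-ε0) ε0 := ⟨by linarith, hε0⟩
  set S : Matrix (Fin d) (Fin d) ℂ := P0 * deriv T 0 * P0 with hSdef
  have hPS : P0 * S = S := by
    rw [hSdef, ← mul_assoc, ← mul_assoc, hP0idem]
  have hSP : S * P0 = S := by
    rw [hSdef, mul_assoc, hP0idem]
  obtain ⟨e, he⟩ : ∃ e, d = e + 1 := ⟨d - 1, (Nat.succ_pred_eq_of_pos hd).symm⟩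
  constructor
  · -- part 1
    by_cases hP0u : IsUnit P0
    · -- P0 is invertible, hence P0 = 1
      have hP1 : P0 = 1 := hP0u.mul_left_cancel (by rw [mul_one, hP0idem])
      subst hP1
      rw [hSdef, one_mul, mul_one]
      rw [hSdef, one_mul, mul_one] at hQrange -- no-op safety
      -- nilpotency of T 0 - 1
      have hnil : ((T 0 - 1).mulVecLin) ^ d = 0 := by
        rw [← LinearMap.ker_eq_top, ← hP0range]
        simp
      by_cases hT1 : T 0 = 1
      · -- Step B : det (deriv T 0) = 0
        rw [spectrum.zero_mem_iff]
        intro hU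
        have hdetne : (deriv T 0).det ≠ 0 := by
          rcases (Matrix.isUnit_iff_isUnit_det _).mp hU with h
          exact h.ne_zero
        have hdiff : HasDerivAt T (deriv T 0) 0 :=
          ((hT 0 h0mem).differentiableAt).hasDerivAt
        have hslope : Tendsto (slope T 0) (𝓝[≠] 0) (𝓝 (deriv T 0)) :=
          hasDerivAt_iff_tendsto_slope.mp hdiff
        have h1 : Tendsto (fun ε => (slope T 0 ε).det) (𝓝[≠] (0:ℝ))
            (𝓝 (deriv T 0).det) :=
          ((Continuous.matrix_det continuous_id).continuousAt.tendsto).comp hslope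
        have h2 : ∀ᶠ ε in 𝓝[≠] (0:ℝ), (slope T 0 ε).det = 0 := by
          have hmem : Set.Ioo (-ε0) ε0 ∈ 𝓝 (0:ℝ) := Ioo_mem_nhds (by linarith) hε0
          filter_upwards [self_mem_nhdsWithin, eventually_nhdsWithin_of_eventually_nhds
            (eventually_of_mem hmem (fun x hx => hx))] with ε hne hmemε
          have hdet0 : (T ε - 1).det = 0 := by
            have hsp := hspec ε hmemε
            rw [spectrum.mem_iff] at hsp
            have : ¬ IsUnit ((1 : Matrix (Fin d) (Fin d) ℂ) - T ε) := by
              simpa using hsp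
            have hdet : ((1 : Matrix (Fin d) (Fin d) ℂ) - T ε).det = 0 := by
              by_contra hne'
              exact this ((Matrix.isUnit_iff_isUnit_det _).mpr (isUnit_iff_ne_zero.mpr hne'))
            rw [← neg_sub (1 : Matrix (Fin d) (Fin d) ℂ) (T ε), Matrix.det_neg, hdet,
              mul_zero]
          have hsl : slope T 0 ε = (ε⁻¹ : ℂ) • (T ε - 1) := by
            rw [slope_def_module, sub_zero, hT1]
            ext i j
            simp [Complex.real_smul]
          rw [hsl, Matrix.det_smul, hdet0, mul_zero]
        have h3 : Tendsto (fun ε => (slope T 0 ε).det) (𝓝[≠] (0:ℝ)) (𝓝 0) :=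
          Tendsto.congr' (h2.mono fun x hx => hx.symm) tendsto_const_nhds
        exact hdetne (tendsto_nhds_unique h1 h3)
      · -- Step A : contradiction from norm bound
        exfalso
        set f := (T 0 - 1).mulVecLin with hf
        have hfne : f ≠ 0 := by
          intro h
          apply hT1
          have h0 : T 0 - 1 = 0 := by
            apply matrix_eq_of_mulVec'
            intro x
            have := congrArg (fun g => g x) h
            simpa [hf, Matrix.mulVecLin_apply, Matrix.sub_mulVec] using this
          rwa [sub_eq_zero] at h0
        obtain ⟨v, hv⟩ : ∃ v, f v ≠ 0 := by
          by_contra h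
          push_neg at h
          exact hfne (LinearMap.ext fun x => h x)
        have hex : ∃ n, (f ^ (n + 1)) v = 0 := ⟨e, by rw [← he, hnil]; rfl⟩
        set j := Nat.find hex with hjdef
        have hj : (f ^ (j + 1)) v = 0 := Nat.find_spec hex
        have hjne : j ≠ 0 := by
          intro h0
          rw [h0, zero_add, pow_one] at hj
          exact hv hj
        obtain ⟨i, hi⟩ : ∃ i, j = i + 1 := Nat.exists_eq_succ_of_ne_zero hjne
        have hlt : ¬ (f ^ (i + 1)) v = 0 := Nat.find_min hex (by omega)
        have happ : ∀ (n : ℕ) (x : Fin d → ℂ), (f ^ (n + 1)) x = f ((f ^ n) x) := by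
          intro n x
          rw [pow_succ']
          rfl
        set u := (f ^ i) v with hu
        set w := f u with hwdef
        have hw : w ≠ 0 := by
          rw [hwdef, hu, ← happ i v]
          exact hlt
        have hfw : f w = 0 := by
          rw [hwdef, hu, ← happ i v, ← happ (i + 1) v]
          have h2 : i + 1 + 1 = j + 1 := by omega
          rw [h2, hj]
        have hT0v : ∀ x, T 0 *ᵥ x = f x + x := by
          intro x
          have h' : T 0 = (T 0 - 1) + 1 := (sub_add_cancel (T 0) 1).symm
          conv_lhs => rw [h']
          rw [Matrix.add_mulVec, Matrix.one_mulVec, hf, Matrix.mulVecLin_apply]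
        have hpow : ∀ k : ℕ, (T 0 ^ k) *ᵥ u = u + (k : ℂ) • w := by
          intro k
          induction k with
          | zero => simp [Matrix.one_mulVec]
          | succ k ih =>
            rw [pow_succ', ← Matrix.mulVec_mulVec, ih, Matrix.mulVec_add,
              Matrix.mulVec_smul, hT0v, hT0v, ← hwdef, hfw]
            push_cast
            module
        -- norm estimates in EuclideanSpace
        set G := (EuclideanSpace.equiv (Fin d) ℂ).symm with hG
        have hGw : (0:ℝ) < ‖G w‖ := by
          rw [norm_pos_iff]
          intro h
          exact hw (G.injective (by rw [h, map_zero]))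
        obtain ⟨k0, hk0⟩ := exists_nat_gt ((2 * ‖G u‖) / ‖G w‖)
        set k := k0 + 1 with hk
        have hkgt : (k : ℝ) * ‖G w‖ > 2 * ‖G u‖ := by
          have : ((2 * ‖G u‖) / ‖G w‖) < (k : ℝ) := by
            have : (k0 : ℝ) < k := by exact_mod_cast Nat.lt_succ_self k0
            linarith
          calc 2 * ‖G u‖ = ((2 * ‖G u‖) / ‖G w‖) * ‖G w‖ := by field_simp
            _ < (k : ℝ) * ‖G w‖ := by exact mul_lt_mul_of_pos_right this hGw
        have hbound : ‖G ((T 0 ^ k) *ᵥ u)‖ ≤ ‖G u‖ := by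
          have h1 : ‖G ((T 0 ^ k) *ᵥ (G u : EuclideanSpace ℂ (Fin d)))‖ ≤ ‖T 0 ^ k‖ * ‖(G u : EuclideanSpace ℂ (Fin d))‖ :=
            Matrix.l2_opNorm_mulVec _ _
          have h2 : ‖T 0 ^ k‖ ≤ ‖T 0‖ ^ k := norm_pow_le' _ (Nat.succ_pos k0)
          have h3 : ‖T 0‖ = 1 := hnorm 0 h0mem
          rw [h3, one_pow] at h2
          calc ‖G ((T 0 ^ k) *ᵥ u)‖ ≤ ‖T 0 ^ k‖ * ‖G u‖ := h1
            _ ≤ 1 * ‖G u‖ := by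
                apply mul_le_mul_of_nonneg_right h2 (norm_nonneg _)
            _ = ‖G u‖ := one_mul _
        rw [hpow k] at hbound
        have hGadd : G (u + (k : ℂ) • w) = G u + (k : ℂ) • G w := by
          simp [hG]
        rw [hGadd] at hbound
        have : ‖(k : ℂ) • G w‖ ≤ ‖G u + (k : ℂ) • G w‖ + ‖G u‖ := by
          have := norm_sub_le (G u + (k : ℂ) • G w) (G u)
          simpa using this
        have hnormsmul : ‖(k : ℂ) • G w‖ = (k : ℝ) * ‖G w‖ := by
          rw [norm_smul]
          simp
        rw [hnormsmul] at this
        linarith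
    · -- P0 not invertible
      rw [spectrum.zero_mem_iff]
      intro hU
      obtain ⟨B, hB⟩ := hU.exists_right_inv
      apply hP0u
      apply IsUnit.of_mul_eq_one (deriv T 0 * P0 * B)
      calc P0 * (deriv T 0 * P0 * B) = (P0 * deriv T 0 * P0) * B := by
            rw [← mul_assoc, ← mul_assoc]
        _ = 1 := hB
  · -- part 2 : P0 * Q = Q * P0
    have hSdP : S ^ d * P0 = S ^ d := by
      have hpd : S ^ d = S ^ e * S := by
        rw [← pow_succ]
        exact congrArg (fun n => S ^ n) he
      rw [hpd, mul_assoc, hSP]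
    have ha : ∀ y : Fin d → ℂ, Q *ᵥ y = 0 → P0 *ᵥ y = y := by
      intro y hy
      obtain ⟨w, ⟨hw1, hw2⟩, -⟩ := hQinv y (by
        simpa [LinearMap.mem_ker, Matrix.mulVecLin_apply] using hy)
      rw [Matrix.mulVecLin_apply] at hw2
      rw [← hw2, Matrix.mulVec_mulVec, hPS]
    have hb : ∀ x : Fin d → ℂ, Q *ᵥ (P0 *ᵥ (Q *ᵥ x)) = P0 *ᵥ (Q *ᵥ x) := by
      intro x
      have hz : (Q *ᵥ x) ∈ LinearMap.ker (S.mulVecLin ^ d) := by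
        rw [← hQrange]
        exact ⟨x, rfl⟩
      have hz2 : (P0 *ᵥ (Q *ᵥ x)) ∈ LinearMap.ker (S.mulVecLin ^ d) := by
        rw [LinearMap.mem_ker, mulVecLin_pow'] at hz ⊢
        rw [Matrix.mulVecLin_apply] at hz ⊢
        calc (S ^ d) *ᵥ (P0 *ᵥ (Q *ᵥ x)) = (S ^ d * P0) *ᵥ (Q *ᵥ x) :=
              Matrix.mulVec_mulVec _ _ _
          _ = (S ^ d) *ᵥ (Q *ᵥ x) := by rw [hSdP]
          _ = 0 := hz
      rw [← hQrange] at hz2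
      obtain ⟨t, ht⟩ := hz2
      rw [Matrix.mulVecLin_apply] at ht
      rw [← ht, Matrix.mulVec_mulVec, hQidem]
    have key : ∀ v : Fin d → ℂ, (P0 * Q) *ᵥ v = (Q * P0) *ᵥ v := by
      intro v
      have hker : Q *ᵥ (v - Q *ᵥ v) = 0 := by
        rw [Matrix.mulVec_sub, Matrix.mulVec_mulVec, hQidem, sub_self]
      have hfix : P0 *ᵥ (v - Q *ᵥ v) = v - Q *ᵥ v := ha _ hker
      have hv : P0 *ᵥ v = P0 *ᵥ (Q *ᵥ v) + (v - Q *ᵥ v) := by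
        have hsplit : v = Q *ᵥ v + (v - Q *ᵥ v) := by abel
        conv_lhs => rw [hsplit]
        rw [Matrix.mulVec_add, hfix]
      rw [← Matrix.mulVec_mulVec, ← Matrix.mulVec_mulVec, hv, Matrix.mulVec_add,
        hb, hker, add_zero]
    apply Matrix.toLin'.injective
    ext v
    simpa [Matrix.toLin'_apply, -Matrix.toLin'_mul] using congrFun (key ((Pi.single v 1 : Fin d → ℂ))) _
end
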